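/- Let ζ be as above with B = ∂_{M̄} ζ and A = ((∇ζ)⁻¹)ᵀ. Then B · ∇_A B = (M̄ · ∇)² η, where η := ζ − id and (M̄·∇)² denotes applying the directional derivative M̄·∇ twice. -/

import Mathlib

/-- The Jacobian matrix (∂_j ζ_i) of ζ : ℝ³ → ℝ³. -/
noncomputable def jac (ζ : (Fin 3 → ℝ) → Fin 3 → ℝ) (x : Fin 3 → ℝ) :
    Matrix (Fin 3) (Fin 3) ℝ :=
  fun i j => fderiv ℝ (fun y => ζ y i) x (Pi.single j 1)

lemma pi_eq_sum_single (v : Fin 3 → ℝ) : v = ∑ m : Fin 3, v m • (Pi.single m 1 : Fin 3 → ℝ) := by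
  funext k
  simp [Finset.sum_apply, Pi.single_apply, Finset.sum_ite_eq']

lemma expand_fderiv {f : (Fin 3 → ℝ) → ℝ} {y v : Fin 3 → ℝ} :
    fderiv ℝ f y v = ∑ k : Fin 3, v k * fderiv ℝ f y (Pi.single k 1) := by
  conv_lhs => rw [pi_eq_sum_single v]
  rw [map_sum]
  simp

/-- With B = ∂_{M̄}ζ = ∇ζ M̄ and A = ((∇ζ)⁻¹)ᵀ for a C² map ζ with det ∇ζ = 1:
B·∇_A B = (M̄·∇)² η, where η := ζ − id. -/
theorem B_gradA_B_eq_second_directional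
    (ζ : (Fin 3 → ℝ) → Fin 3 → ℝ) (Mb : Fin 3 → ℝ)
    (hζ : ContDiff ℝ 2 ζ) (hdet : ∀ y, (jac ζ y).det = 1) :
    ∀ (y : Fin 3 → ℝ) (i : Fin 3),
      (∑ j : Fin 3, ∑ k : Fin 3, (jac ζ y).mulVec Mb j * ((jac ζ y)⁻¹).transpose j k *
          fderiv ℝ (fun z => (jac ζ z).mulVec Mb i) y (Pi.single k 1))
        = fderiv ℝ (fun z => fderiv ℝ (fun w => ζ w i - w i) z Mb) y Mb := by
  intro y i
  have hζi : ContDiff ℝ 2 (fun w => ζ w i) := (contDiff_pi.mp hζ) i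
  have hg : ContDiff ℝ 1 (fderiv ℝ (fun w => ζ w i)) :=
    hζi.fderiv_right (le_refl 2)
  have hB : ∀ v : Fin 3 → ℝ, Differentiable ℝ (fun z => fderiv ℝ (fun w => ζ w i) z v) :=
    fun v => (hg.clm_apply contDiff_const).differentiable one_ne_zero
  -- B_i as a function equals z ↦ fderiv ζ_i z Mb
  have hBfun : (fun z => (jac ζ z).mulVec Mb i) = fun z => fderiv ℝ (fun w => ζ w i) z Mb := by
    funext z
    rw [expand_fderiv]
    simp [jac, Matrix.mulVec, dotProduct, Fin.sum_univ_three, mul_comm]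
  -- matrix inverse
  have hinv : (jac ζ y)⁻¹ * (jac ζ y) = 1 :=
    Matrix.nonsing_inv_mul _ (by rw [hdet]; exact isUnit_one)
  -- LHS simplification
  have hlhs : (∑ j : Fin 3, ∑ k : Fin 3, (jac ζ y).mulVec Mb j * ((jac ζ y)⁻¹).transpose j k *
          fderiv ℝ (fun z => (jac ζ z).mulVec Mb i) y (Pi.single k 1))
      = ∑ k : Fin 3, Mb k * fderiv ℝ (fun z => (jac ζ z).mulVec Mb i) y (Pi.single k 1) := by
    rw [Finset.sum_comm]
    refine Finset.sum_congr rfl fun k _ => ?_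
    rw [← Finset.sum_mul]
    congr 1
    have : (∑ j : Fin 3, (jac ζ y).mulVec Mb j * ((jac ζ y)⁻¹).transpose j k)
        = ((jac ζ y)⁻¹).mulVec ((jac ζ y).mulVec Mb) k := by
      simp [Matrix.mulVec, dotProduct, Matrix.transpose_apply, Fin.sum_univ_three]
      ring
    rw [this, Matrix.mulVec_mulVec, hinv, Matrix.one_mulVec]
  rw [hlhs, hBfun, ← expand_fderiv]
  -- RHS simplification
  have hinner : (fun z => fderiv ℝ (fun w => ζ w i - w i) z Mb)
      = fun z => fderiv ℝ (fun w => ζ w i) z Mb - Mb i := by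
    funext z
    have h1 : DifferentiableAt ℝ (fun w => ζ w i) z := hζi.differentiable two_ne_zero z
    have h2 : DifferentiableAt ℝ (fun w : Fin 3 → ℝ => w i) z :=
      (differentiable_pi.mp differentiable_id i) z
    rw [fderiv_fun_sub h1 h2]
    have : fderiv ℝ (fun w : Fin 3 → ℝ => w i) z = ContinuousLinearMap.proj i :=
      (ContinuousLinearMap.proj (R := ℝ) (φ := fun _ : Fin 3 => ℝ) i).fderiv
    simp [this]
  rw [hinner]
  rw [fderiv_sub_const]
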